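/- Let d ∈ (0,1), A > 0, ρ ∈ (0,1). Suppose Λ(ρ) is a finite family of axis-parallel squares in [0,1]² of side ≈ ρ, with #Λ(ρ) ≤ C ρ^{−d}, mutual distances ≥ cρ, and the counting bound #{Q′ ∈ Λ(ρ) : dist(Q, Q′) < ε} ≤ C(ε/ρ)^{d} for all Q ∈ Λ(ρ) and all ε > ρ. Define N(λ) = #{(Q,Q′) ∈ Λ(ρ)² : Π_λ(Q) ∩ Π_λ(Q′) ≠ ∅} where Π_λ(x,y) = x + λy. Then ∫_{−A}^{A} N(λ) dλ ≤ C′ ρ^{−d} for a constant C′ depending only on A, C, c, d. -/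

import Mathlib

open MeasureTheory

/-- Volume of a band `{l : |u + l m| ≤ B}` intersected with `[-A,A]`, under the
assumption that `max |u| |m| ≥ t`. -/
lemma band_vol (A B t u m : ℝ) (hA : 0 < A) (hB : 0 ≤ B) (ht : 0 < t)
    (hmax : t ≤ max |u| |m|) :
    (volume (Set.Icc (-A) A ∩ {l : ℝ | |u + l * m| ≤ B})).toReal
      ≤ 4 * (A + 1) * B / t := by
  have hA1 : (0:ℝ) < A + 1 := by linarith
  by_cases hm : t / (2 * (A + 1)) ≤ |m|
  · -- slope is big: band has small measure
    have hm0 : 0 < |m| := lt_of_lt_of_le (by positivity) hm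
    have hmne : m ≠ 0 := by simpa [abs_pos] using hm0
    have hEq : {l : ℝ | |u + l * m| ≤ B}
        = Metric.closedBall (-u / m) (B / |m|) := by
      ext l
      have h1 : |u + l * m| = |m| * |l - (-u / m)| := by
        rw [← abs_mul]
        congr 1
        field_simp
        ring
      simp only [Set.mem_setOf_eq, Metric.mem_closedBall, Real.dist_eq, h1,
        le_div_iff₀ hm0]
      rw [mul_comm]
    have hvol : volume (Set.Icc (-A) A ∩ {l : ℝ | |u + l * m| ≤ B})
        ≤ ENNReal.ofReal (2 * (B / |m|)) := by
      rw [hEq]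
      refine le_trans (measure_mono Set.inter_subset_right) ?_
      rw [Real.volume_closedBall]
    refine le_trans (ENNReal.toReal_le_of_le_ofReal (by positivity) hvol) ?_
    have h1 : 2 * (B / |m|) = 2 * B / |m| := by ring
    have h2 : t ≤ 2 * (A + 1) * |m| := by
      rw [div_le_iff₀ (by positivity : (0:ℝ) < 2 * (A + 1))] at hm
      linarith
    rw [h1, div_le_div_iff₀ hm0 ht]
    nlinarith
  · push_neg at hm
    by_cases hne : (Set.Icc (-A) A ∩ {l : ℝ | |u + l * m| ≤ B}).Nonempty
    · obtain ⟨l₀, hl₀I, hl₀⟩ := hne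
      have hl₀A : |l₀| ≤ A := by
        rw [abs_le]; exact ⟨hl₀I.1, hl₀I.2⟩
      have hu : t ≤ |u| := by
        rcases max_cases |u| |m| with ⟨h1, _⟩ | ⟨h1, _⟩
        · rwa [h1] at hmax
        · exfalso
          have : t / (2 * (A + 1)) < t := by
            rw [div_lt_iff₀ (by positivity)]
            nlinarith
          rw [h1] at hmax
          linarith
      have hband : |u + l₀ * m| ≤ B := hl₀
      have h2 : |u| ≤ B + |l₀| * |m| := by
        have h := abs_sub (u + l₀ * m) (l₀ * m)
        rw [add_sub_cancel_right, abs_mul] at h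
        linarith
      have h3 : |l₀| * |m| ≤ t / 2 := by
        have := mul_le_mul hl₀A hm.le (abs_nonneg m) hA.le
        have hAle : A * (t / (2 * (A + 1))) ≤ t / 2 := by
          rw [mul_comm, div_mul_eq_mul_div, div_le_div_iff₀ (by positivity) two_pos]
          nlinarith
        linarith
      have htB : t ≤ 2 * B := by
        have : t ≤ B + t / 2 := le_trans hu (by linarith)
        linarith
      have hB0 : 0 < B := by linarith
      have hvol : (volume (Set.Icc (-A) A ∩ {l : ℝ | |u + l * m| ≤ B})).toReal
          ≤ 2 * A := by
        refine ENNReal.toReal_le_of_le_ofReal (by positivity) ?_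
        refine le_trans (measure_mono Set.inter_subset_left) ?_
        rw [Real.volume_Icc]
        exact ENNReal.ofReal_le_ofReal (by linarith)
      refine le_trans hvol ?_
      rw [le_div_iff₀ ht]
      nlinarith
    · rw [Set.not_nonempty_iff_eq_empty] at hne
      rw [hne, measure_empty]
      simp only [ENNReal.toReal_zero]
      positivity

lemma geom_bound (r : ℝ) (h0 : 0 ≤ r) (h1 : r < 1) (n : ℕ) :
    ∑ k ∈ Finset.range n, r ^ k ≤ (1 - r)⁻¹ := by
  rw [geom_sum_eq (by linarith) n]
  have hr : 0 < 1 - r := by linarith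
  have h2 : (r ^ n - 1) / (r - 1) = (1 - r ^ n) / (1 - r) := by
    rw [← neg_div_neg_eq]; ring_nf
  rw [h2, ← one_div]
  gcongr
  have : 0 ≤ r ^ n := pow_nonneg h0 n
  linarith

set_option maxHeartbeats 1000000

/-- Energy/transversality estimate: for a family of `≈ρ`-squares in `[0,1]²` with
cardinality `≤ Cρ^(−d)`, mutual distances `≥ cρ`, and the natural counting bound
at all scales `ε > ρ`, the number `N(λ)` of pairs of squares whose projections
`Π_λ(x,y) = x + λy` overlap satisfies `∫_{-A}^{A} N(λ) dλ ≤ C′ ρ^(−d)`, with `C′`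
depending only on `A, C, c, d`. -/
theorem stmt_7 (A C c d : ℝ) (hA : 0 < A) (hC : 0 < C) (hc : 0 < c)
    (hd0 : 0 < d) (hd1 : d < 1) :
    ∃ C' : ℝ, 0 < C' ∧
    ∀ (ρ : ℝ), 0 < ρ → ρ < 1 →
    ∀ {ι : Type} [Fintype ι] (Q : ι → Set (ℝ × ℝ)),
      -- each Q i is an axis-parallel square in [0,1]² of side between cρ and ρ
      (∀ i, ∃ x y s, c * ρ ≤ s ∧ s ≤ ρ ∧
          Q i = Set.Icc x (x + s) ×ˢ Set.Icc y (y + s) ∧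
          Q i ⊆ Set.Icc 0 1 ×ˢ Set.Icc 0 1) →
      -- cardinality bound
      ((Fintype.card ι : ℝ) ≤ C * ρ ^ (-d)) →
      -- mutual separation
      (∀ i j, i ≠ j → ∀ p ∈ Q i, ∀ q ∈ Q j, c * ρ ≤ dist p q) →
      -- counting bound at every scale ε > ρ
      (∀ i, ∀ ε : ℝ, ρ < ε →
        ((Nat.card {j : ι | ∃ p ∈ Q i, ∃ q ∈ Q j, dist p q < ε} : ℝ)
          ≤ C * (ε / ρ) ^ d)) →
      ∫ l in Set.Icc (-A) A,
          ((Nat.card {p : ι × ι |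
              (((fun z : ℝ × ℝ => z.1 + l * z.2) '' Q p.1) ∩
               ((fun z : ℝ × ℝ => z.1 + l * z.2) '' Q p.2)).Nonempty} : ℝ))
        ≤ C' * ρ ^ (-d) := by
  classical
  -- the geometric ratio
  set r : ℝ := (2:ℝ) ^ d / 2 with hr_def
  have hr0 : 0 < r := by positivity
  have hr1 : r < 1 := by
    rw [hr_def, div_lt_one two_pos]
    calc (2:ℝ) ^ d < (2:ℝ) ^ (1:ℝ) := by
          exact Real.rpow_lt_rpow_left_iff one_lt_two |>.mpr hd1
      _ = 2 := Real.rpow_one 2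
  set Kc : ℝ := 8 * (A + 1) ^ 2 / c with hKc_def
  have hKc0 : 0 < Kc := by positivity
  set M : ℝ := 2 * A + Kc * (C * (2 * (c + 1)) ^ d) * (1 - r)⁻¹ with hM_def
  have hM0 : 0 < M := by
    have h1 : (0:ℝ) < (2 * (c + 1)) ^ d := Real.rpow_pos_of_pos (by linarith) d
    have h2 : (0:ℝ) < (1 - r)⁻¹ := by
      rw [inv_pos]; linarith
    positivity
  refine ⟨C * M, by positivity, ?_⟩
  intro ρ hρ0 hρ1 ι _ Q hQ hcard hsep hcount
  choose X Y S hS1 hS2 hQeq hQsub using hQ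
  have hS0 : ∀ i, 0 < S i := fun i => lt_of_lt_of_le (by positivity) (hS1 i)
  have hcorner : ∀ i, (X i, Y i) ∈ Q i := by
    intro i
    rw [hQeq i]
    constructor <;> simp [le_add_of_nonneg_right (hS0 i).le]
  have hcorner01 : ∀ i, X i ∈ Set.Icc (0:ℝ) 1 ∧ Y i ∈ Set.Icc (0:ℝ) 1 := by
    intro i
    have := hQsub i (hcorner i)
    exact ⟨this.1, this.2⟩
  -- the band around each pair, containing all λ where projections overlap
  set B : ℝ := 2 * ρ * (A + 1) with hB_def
  have hB0 : 0 < B := by positivity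
  set E : ι × ι → Set ℝ :=
    fun p => {l : ℝ | |(X p.1 - X p.2) + l * (Y p.1 - Y p.2)| ≤ B} with hE_def
  have hEmeas : ∀ p, MeasurableSet (E p) := by
    intro p
    have : E p = (fun l : ℝ => |(X p.1 - X p.2) + l * (Y p.1 - Y p.2)|) ⁻¹'
        (Set.Iic B) := rfl
    rw [this]
    exact ((continuous_const.add (continuous_id.mul continuous_const)).abs).measurable
      measurableSet_Iic
  -- points of Q i are within S i of the corner
  have hclose : ∀ i, ∀ p ∈ Q i, |X i - p.1| ≤ ρ ∧ |Y i - p.2| ≤ ρ := by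
    intro i p hp
    rw [hQeq i] at hp
    obtain ⟨h1, h2⟩ := hp
    simp only [Set.mem_Icc] at h1 h2
    constructor <;> rw [abs_le] <;> constructor <;>
      [skip; skip; skip; skip] <;> nlinarith [hS2 i, h1.1, h1.2, h2.1, h2.2]
  -- overlap at l ∈ [-A,A] implies l ∈ E p
  have hover : ∀ l ∈ Set.Icc (-A) A, ∀ p : ι × ι,
      (((fun z : ℝ × ℝ => z.1 + l * z.2) '' Q p.1) ∩
       ((fun z : ℝ × ℝ => z.1 + l * z.2) '' Q p.2)).Nonempty → l ∈ E p := by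
    rintro l hl ⟨i, j⟩ ⟨z, ⟨a, ha, haz⟩, ⟨b, hb, hbz⟩⟩
    have hlA : |l| ≤ A := abs_le.mpr ⟨hl.1, hl.2⟩
    have hfa := hclose i a ha
    have hfb := hclose j b hb
    have hz : a.1 + l * a.2 = b.1 + l * b.2 := by
      have := haz.trans hbz.symm; simpa using this
    simp only [hE_def, Set.mem_setOf_eq]
    have key : (X i - X j) + l * (Y i - Y j)
        = (X i - a.1) - (X j - b.1) + l * ((Y i - a.2) - (Y j - b.2)) := by
      linarith [hz]
    rw [key]
    calc |(X i - a.1) - (X j - b.1) + l * ((Y i - a.2) - (Y j - b.2))|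
        ≤ |(X i - a.1) - (X j - b.1)| + |l * ((Y i - a.2) - (Y j - b.2))| :=
          abs_add_le _ _
      _ ≤ (|X i - a.1| + |X j - b.1|) + |l| * (|Y i - a.2| + |Y j - b.2|) := by
          rw [abs_mul]
          gcongr <;> [exact abs_sub _ _; exact abs_sub _ _]
      _ ≤ (ρ + ρ) + A * (ρ + ρ) := by
          have h1 : |X i - a.1| + |X j - b.1| ≤ ρ + ρ := by
            have := hfa.1; have := hfb.1; linarith
          have h2 : |l| * (|Y i - a.2| + |Y j - b.2|) ≤ A * (ρ + ρ) := by
            have h3 : |Y i - a.2| + |Y j - b.2| ≤ ρ + ρ := by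
              have := hfa.2; have := hfb.2; linarith
            exact mul_le_mul hlA h3 (by positivity) hA.le
          linarith
      _ = B := by rw [hB_def]; ring
  -- the dominating function
  set g : ℝ → ℝ := fun l => ∑ p : ι × ι, (E p).indicator (fun _ => (1:ℝ)) l
    with hg_def
  have hIccvol : volume (Set.Icc (-A) A) < ⊤ := by
    rw [Real.volume_Icc]; exact ENNReal.ofReal_lt_top
  have hgint : ∀ p : ι × ι,
      IntegrableOn ((E p).indicator (fun _ => (1:ℝ))) (Set.Icc (-A) A) volume := by
    intro p
    exact (integrableOn_const hIccvol.ne).indicator (hEmeas p)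
  have hgInt : Integrable g (volume.restrict (Set.Icc (-A) A)) :=
    integrable_finset_sum _ (fun p _ => hgint p)
  -- pointwise bound
  have hpt : ∀ l ∈ Set.Icc (-A) A,
      ((Nat.card {p : ι × ι |
          (((fun z : ℝ × ℝ => z.1 + l * z.2) '' Q p.1) ∩
           ((fun z : ℝ × ℝ => z.1 + l * z.2) '' Q p.2)).Nonempty} : ℝ)) ≤ g l := by
    intro l hl
    rw [Nat.card_eq_fintype_card, Fintype.card_subtype]
    rw [Finset.card_filter]
    push_cast
    simp only [Set.mem_setOf_eq]
    refine Finset.sum_le_sum (fun p _ => ?_)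
    by_cases hp : (((fun z : ℝ × ℝ => z.1 + l * z.2) '' Q p.1) ∩
        ((fun z : ℝ × ℝ => z.1 + l * z.2) '' Q p.2)).Nonempty
    · rw [if_pos hp, Set.indicator_of_mem (hover l hl p hp)]
    · rw [if_neg hp]
      exact Set.indicator_nonneg (fun _ _ => zero_le_one) l
  -- the integral is at most the integral of g
  have hint1 : ∫ l in Set.Icc (-A) A,
      ((Nat.card {p : ι × ι |
          (((fun z : ℝ × ℝ => z.1 + l * z.2) '' Q p.1) ∩
           ((fun z : ℝ × ℝ => z.1 + l * z.2) '' Q p.2)).Nonempty} : ℝ))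
      ≤ ∫ l in Set.Icc (-A) A, g l := by
    refine integral_mono_of_nonneg ?_ hgInt ?_
    · exact Filter.Eventually.of_forall (fun l => by positivity)
    · filter_upwards [ae_restrict_mem measurableSet_Icc] with l hl
      exact hpt l hl
  -- compute ∫ g
  have hint2 : ∫ l in Set.Icc (-A) A, g l
      = ∑ p : ι × ι, (volume (Set.Icc (-A) A ∩ E p)).toReal := by
    rw [hg_def, integral_finset_sum _ (fun p _ => hgint p)]
    congr 1
    ext p
    rw [setIntegral_indicator (hEmeas p), setIntegral_const, smul_eq_mul, mul_one]; rfl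
  refine le_trans hint1 (le_trans (le_of_eq hint2) ?_)
  -- choose the number of dyadic scales
  obtain ⟨n, hn⟩ : ∃ n : ℕ, 1 < 2 ^ n * (c * ρ) := by
    obtain ⟨n, hn⟩ := pow_unbounded_of_one_lt (1 / (c * ρ)) (one_lt_two (α := ℝ))
    refine ⟨n, ?_⟩
    rw [div_lt_iff₀ (by positivity)] at hn
    linarith
  have hpow2 : ∀ k : ℕ, ((2:ℝ) ^ k) ^ d = ((2:ℝ) ^ d) ^ k := by
    intro k
    rw [← Real.rpow_natCast 2 k, ← Real.rpow_mul (by norm_num), mul_comm,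
      Real.rpow_mul (by norm_num), Real.rpow_natCast]
  -- diagonal bound
  have hdiag : ∀ i : ι, (volume (Set.Icc (-A) A ∩ E (i, i))).toReal ≤ 2 * A := by
    intro i
    refine ENNReal.toReal_le_of_le_ofReal (by positivity) ?_
    refine le_trans (measure_mono Set.inter_subset_left) ?_
    rw [Real.volume_Icc]
    exact ENNReal.ofReal_le_ofReal (by linarith)
  -- per-pair off-diagonal bound via dyadic scale selection
  have hpair : ∀ i j : ι, i ≠ j →
      (volume (Set.Icc (-A) A ∩ E (i, j))).toReal
        ≤ ∑ k ∈ Finset.range (n + 1),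
            (if (∃ p ∈ Q i, ∃ q ∈ Q j, dist p q < 2 ^ (k+1) * (c * ρ)) then
              Kc * (1/2 : ℝ) ^ k else 0) := by
    intro i j hij
    have hdXY : dist ((X i, Y i) : ℝ × ℝ) ((X j, Y j) : ℝ × ℝ)
        = max |X i - X j| |Y i - Y j| := by
      rw [Prod.dist_eq]
      simp [Real.dist_eq]
    have hd1 : dist ((X i, Y i) : ℝ × ℝ) ((X j, Y j) : ℝ × ℝ) ≤ 1 := by
      rw [hdXY]
      have h1 := (hcorner01 i).1; have h2 := (hcorner01 j).1
      have h3 := (hcorner01 i).2; have h4 := (hcorner01 j).2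
      simp only [Set.mem_Icc] at h1 h2 h3 h4
      rw [max_le_iff]
      constructor <;> rw [abs_le] <;> constructor <;> linarith
    have hPn : ∃ p ∈ Q i, ∃ q ∈ Q j, dist p q < 2 ^ (n+1) * (c * ρ) := by
      refine ⟨(X i, Y i), hcorner i, (X j, Y j), hcorner j, ?_⟩
      have h2n : (2:ℝ) ^ (n+1) * (c * ρ) = 2 * (2 ^ n * (c * ρ)) := by ring
      rw [h2n]; linarith
    have hex : ∃ k : ℕ, ∃ p ∈ Q i, ∃ q ∈ Q j, dist p q < 2 ^ (k+1) * (c * ρ) :=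
      ⟨n, hPn⟩
    have hk₀n : Nat.find hex ≤ n := Nat.find_le hPn
    set k₀ := Nat.find hex with hk₀def
    have hlevel : ∀ p ∈ Q i, ∀ q ∈ Q j, 2 ^ k₀ * (c * ρ) ≤ dist p q := by
      by_cases hk0 : k₀ = 0
      · intro p hp q hq
        rw [hk0]
        have := hsep i j hij p hp q hq
        norm_num
        linarith
      · obtain ⟨m, hm⟩ := Nat.exists_eq_succ_of_ne_zero hk0
        have hmin := Nat.find_min hex (by omega : m < k₀)
        push_neg at hmin
        intro p hp q hq
        have := hmin p hp q hq
        rw [hm]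
        exact this
    have hmaxuv : 2 ^ k₀ * (c * ρ) ≤ max |X i - X j| |Y i - Y j| := by
      rw [← hdXY]
      exact hlevel _ (hcorner i) _ (hcorner j)
    have hEeq : Set.Icc (-A) A ∩ E (i, j)
        = Set.Icc (-A) A ∩ {l : ℝ | |(X i - X j) + l * (Y i - Y j)| ≤ B} := rfl
    rw [hEeq]
    have hb := band_vol A B (2 ^ k₀ * (c * ρ)) (X i - X j) (Y i - Y j) hA hB0.le
      (by positivity) hmaxuv
    refine le_trans hb ?_
    have hfind : ∃ p ∈ Q i, ∃ q ∈ Q j, dist p q < 2 ^ (k₀+1) * (c * ρ) :=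
      Nat.find_spec hex
    have hterm : 4 * (A + 1) * B / (2 ^ k₀ * (c * ρ)) = Kc * (1/2 : ℝ) ^ k₀ := by
      rw [hB_def, hKc_def]
      have h1 : ((2:ℝ) ^ k₀) ≠ 0 := by positivity
      field_simp
      rw [div_pow, one_pow]
      field_simp
      ring
    rw [hterm]
    have hif : (if (∃ p ∈ Q i, ∃ q ∈ Q j, dist p q < 2 ^ (k₀+1) * (c * ρ)) then
        Kc * (1/2 : ℝ) ^ k₀ else 0) = Kc * (1/2 : ℝ) ^ k₀ := if_pos hfind
    rw [← hif]
    exact Finset.single_le_sum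
      (f := fun k => if (∃ p ∈ Q i, ∃ q ∈ Q j, dist p q < 2 ^ (k+1) * (c * ρ)) then
        Kc * (1/2 : ℝ) ^ k else 0)
      (fun k _ => by split_ifs <;> positivity)
      (Finset.mem_range.mpr (Nat.lt_succ_of_le hk₀n))
  -- counting bound per scale
  have hscale : ∀ i : ι, ∀ k : ℕ,
      ((Finset.univ.filter
          (fun j : ι => ∃ p ∈ Q i, ∃ q ∈ Q j, dist p q < 2 ^ (k+1) * (c * ρ))).card : ℝ)
        ≤ C * (2 ^ (k+1) * c + 1) ^ d := by
    intro i k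
    set ε := ((2:ℝ) ^ (k+1) * c + 1) * ρ with hεdef
    have hpk : (0:ℝ) < 2 ^ (k+1) := by positivity
    have hερ : ρ < ε := by
      rw [hεdef]
      nlinarith [mul_pos (mul_pos hpk hc) hρ0]
    have h0 := hcount i ε hερ
    have hεdiv : ε / ρ = 2 ^ (k+1) * c + 1 := by
      rw [hεdef]
      field_simp
    rw [hεdiv] at h0
    refine le_trans ?_ h0
    have hNat : (Nat.card {j : ι | ∃ p ∈ Q i, ∃ q ∈ Q j, dist p q < ε})
        = (Finset.univ.filter
            (fun j : ι => ∃ p ∈ Q i, ∃ q ∈ Q j, dist p q < ε)).card := by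
      rw [Nat.card_eq_fintype_card, Fintype.card_subtype]
      simp only [Set.mem_setOf_eq]
    rw [hNat]
    have hsub : (Finset.univ.filter
          (fun j : ι => ∃ p ∈ Q i, ∃ q ∈ Q j, dist p q < 2 ^ (k+1) * (c * ρ)))
        ⊆ (Finset.univ.filter
          (fun j : ι => ∃ p ∈ Q i, ∃ q ∈ Q j, dist p q < ε)) := by
      intro j hj
      rw [Finset.mem_filter] at hj ⊢
      obtain ⟨-, p, hp, q, hq, hd⟩ := hj
      refine ⟨Finset.mem_univ j, p, hp, q, hq, lt_of_lt_of_le hd ?_⟩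
      rw [hεdef]
      nlinarith
    exact_mod_cast Nat.cast_le.mpr (Finset.card_le_card hsub)
  -- off-diagonal sum per i
  have hoff : ∀ i : ι,
      ∑ j ∈ Finset.univ.erase i, (volume (Set.Icc (-A) A ∩ E (i, j))).toReal
        ≤ Kc * (C * (2 * (c + 1)) ^ d) * (1 - r)⁻¹ := by
    intro i
    have step1 : ∑ j ∈ Finset.univ.erase i,
        (volume (Set.Icc (-A) A ∩ E (i, j))).toReal
        ≤ ∑ j ∈ Finset.univ.erase i, ∑ k ∈ Finset.range (n + 1),
            (if (∃ p ∈ Q i, ∃ q ∈ Q j, dist p q < 2 ^ (k+1) * (c * ρ)) then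
              Kc * (1/2 : ℝ) ^ k else 0) :=
      Finset.sum_le_sum (fun j hj => hpair i j (Finset.ne_of_mem_erase hj).symm)
    refine le_trans step1 ?_
    rw [Finset.sum_comm]
    have step2 : ∀ k ∈ Finset.range (n + 1),
        ∑ j ∈ Finset.univ.erase i,
          (if (∃ p ∈ Q i, ∃ q ∈ Q j, dist p q < 2 ^ (k+1) * (c * ρ)) then
            Kc * (1/2 : ℝ) ^ k else 0)
        ≤ Kc * C * (2 * (c + 1)) ^ d * r ^ k := by
      intro k _
      rw [← Finset.sum_filter, Finset.sum_const, nsmul_eq_mul]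
      have hcard_le : (((Finset.univ.erase i).filter
          (fun j : ι => ∃ p ∈ Q i, ∃ q ∈ Q j, dist p q < 2 ^ (k+1) * (c * ρ))).card : ℝ)
          ≤ C * (2 ^ (k+1) * c + 1) ^ d := by
        refine le_trans ?_ (hscale i k)
        have : ((Finset.univ.erase i).filter
            (fun j : ι => ∃ p ∈ Q i, ∃ q ∈ Q j, dist p q < 2 ^ (k+1) * (c * ρ)))
            ⊆ (Finset.univ.filter
            (fun j : ι => ∃ p ∈ Q i, ∃ q ∈ Q j, dist p q < 2 ^ (k+1) * (c * ρ))) := by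
          intro j hj
          rw [Finset.mem_filter] at hj ⊢
          exact ⟨Finset.mem_univ j, hj.2⟩
        exact_mod_cast Nat.cast_le.mpr (Finset.card_le_card this)
      have hrpow : ((2:ℝ) ^ (k+1) * c + 1) ^ d ≤ ((2:ℝ) ^ d) ^ k * (2 * (c + 1)) ^ d := by
        have h2k : (1:ℝ) ≤ 2 ^ k := one_le_pow₀ (by norm_num)
        have h1 : ((2:ℝ) ^ (k+1) * c + 1) ≤ 2 ^ k * (2 * (c + 1)) := by
          have : (2:ℝ) ^ (k+1) = 2 ^ k * 2 := by ring
          rw [this]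
          nlinarith
        have h2 : ((2:ℝ) ^ (k+1) * c + 1) ^ d ≤ ((2:ℝ) ^ k * (2 * (c + 1))) ^ d :=
          Real.rpow_le_rpow (by positivity) h1 hd0.le
        have h3 : ((2:ℝ) ^ k * (2 * (c + 1))) ^ d = ((2:ℝ) ^ d) ^ k * (2 * (c + 1)) ^ d := by
          rw [Real.mul_rpow (by positivity) (by positivity), hpow2]
        rw [← h3]
        exact h2
      have h5 : ((1/2 : ℝ)) ^ k * ((2:ℝ) ^ d) ^ k = r ^ k := by
        rw [← mul_pow]
        congr 1
        rw [hr_def]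
        ring
      have h4 : Kc * (1/2 : ℝ) ^ k * (C * (((2:ℝ) ^ d) ^ k * (2 * (c + 1)) ^ d))
          = Kc * C * (2 * (c + 1)) ^ d * r ^ k := by
        rw [← h5]
        ring
      calc (((Finset.univ.erase i).filter
            (fun j : ι => ∃ p ∈ Q i, ∃ q ∈ Q j, dist p q < 2 ^ (k+1) * (c * ρ))).card : ℝ)
            * (Kc * (1/2 : ℝ) ^ k)
          ≤ (C * (2 ^ (k+1) * c + 1) ^ d) * (Kc * (1/2 : ℝ) ^ k) := by
            refine mul_le_mul_of_nonneg_right hcard_le (by positivity)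
        _ ≤ (C * (((2:ℝ) ^ d) ^ k * (2 * (c + 1)) ^ d)) * (Kc * (1/2 : ℝ) ^ k) := by
            refine mul_le_mul_of_nonneg_right ?_ (by positivity)
            exact mul_le_mul_of_nonneg_left hrpow hC.le
        _ = Kc * C * (2 * (c + 1)) ^ d * r ^ k := by rw [← h4]; ring
    refine le_trans (Finset.sum_le_sum step2) ?_
    rw [← Finset.mul_sum]
    have hgeo := geom_bound r hr0.le hr1 (n + 1)
    have hpos : (0:ℝ) ≤ Kc * C * (2 * (c + 1)) ^ d := by
      have := Real.rpow_pos_of_pos (by linarith : (0:ℝ) < 2 * (c + 1)) d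
      positivity
    calc Kc * C * (2 * (c + 1)) ^ d * ∑ k ∈ Finset.range (n + 1), r ^ k
        ≤ Kc * C * (2 * (c + 1)) ^ d * (1 - r)⁻¹ :=
          mul_le_mul_of_nonneg_left hgeo hpos
      _ = Kc * (C * (2 * (c + 1)) ^ d) * (1 - r)⁻¹ := by ring
  -- assemble
  calc ∑ p : ι × ι, (volume (Set.Icc (-A) A ∩ E p)).toReal
      = ∑ i : ι, ∑ j : ι, (volume (Set.Icc (-A) A ∩ E (i, j))).toReal :=
        Fintype.sum_prod_type _
    _ = ∑ i : ι, ((volume (Set.Icc (-A) A ∩ E (i, i))).toReal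
          + ∑ j ∈ Finset.univ.erase i, (volume (Set.Icc (-A) A ∩ E (i, j))).toReal) := by
        refine Finset.sum_congr rfl (fun i _ => ?_)
        exact (Finset.add_sum_erase _ _ (Finset.mem_univ i)).symm
    _ ≤ ∑ _i : ι, M := by
        refine Finset.sum_le_sum (fun i _ => ?_)
        rw [hM_def]
        exact add_le_add (hdiag i) (hoff i)
    _ = (Fintype.card ι : ℝ) * M := by
        rw [Finset.sum_const, Finset.card_univ, nsmul_eq_mul]
    _ ≤ (C * ρ ^ (-d)) * M := mul_le_mul_of_nonneg_right hcard hM0.le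
    _ = C * M * ρ ^ (-d) := by ring
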